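/- Let p be an odd prime and let k be an integer with 0 ≤ k ≤ (p-1)/2. Then (-16)^k · C((p-1)/2 + k, 2k) ≡ C(2k,k) (mod p²), i.e. (-1)^k · 16^k · C((p-1)/2 + k, 2k) ≡ C(2k,k) (mod p²). Equivalently, C((p-1)/2 + k, 2k) ≡ C(2k,k) · (-16)^(-k) (mod p²). -/
import Mathlib

lemma desc_step (m k : ℕ) (hk : k ≤ m) :
    (m + (k + 1)).descFactorial (2 * (k + 1))
      = (m + k + 1) * ((m - k) * (m + k).descFactorial (2 * k)) := by
  have h1 : m + (k + 1) = (m + k) + 1 := by ring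
  have h2 : 2 * (k + 1) = (2 * k + 1) + 1 := by ring
  rw [h1, h2, Nat.succ_descFactorial_succ, Nat.descFactorial_succ]
  have : m + k - 2 * k = m - k := by omega
  rw [this]

lemma binom_step (k : ℕ) :
    ((2 * (k + 1)).factorial * (2 * (k + 1)).choose (k + 1) : ℤ)
      = 4 * (2 * (k : ℤ) + 1) ^ 2 * ((2 * k).factorial * (2 * k).choose k) := by
  have hc : ((k : ℕ) + 1) * Nat.centralBinom (k + 1) = 2 * (2 * k + 1) * Nat.centralBinom k :=
    Nat.succ_mul_centralBinom_succ k
  have hcz : ((k : ℤ) + 1) * (2 * (k + 1)).choose (k + 1)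
      = 2 * (2 * (k : ℤ) + 1) * (2 * k).choose k := by
    have := hc
    unfold Nat.centralBinom at this
    exact_mod_cast congrArg (Nat.cast : ℕ → ℤ) this
  have hf : ((2 * (k + 1)).factorial : ℤ)
      = (2 * (k : ℤ) + 2) * (2 * k + 1) * (2 * k).factorial := by
    have h2 : 2 * (k + 1) = (2 * k + 1) + 1 := by ring
    rw [h2, Nat.factorial_succ, Nat.factorial_succ]
    push_cast
    ring
  have hne : ((k : ℤ) + 1) ≠ 0 := by positivity
  apply mul_left_cancel₀ hne
  rw [hf]
  linear_combination ((2 * (k : ℤ) + 2) * (2 * k + 1) * ((2 * k).factorial : ℤ)) * hcz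

lemma aux_congr (p m : ℕ) (hpm : p = 2 * m + 1) (k : ℕ) (hk : k ≤ m) :
    ((-16 : ℤ)) ^ k * ((m + k).descFactorial (2 * k) : ℤ)
      ≡ ((2 * k).factorial * (2 * k).choose k : ℤ) [ZMOD (p : ℤ) ^ 2] := by
  induction k with
  | zero => simp
  | succ k ih =>
    have hk' : k ≤ m := Nat.le_of_succ_le hk
    have ihk := ih hk'
    have hd := desc_step m k hk'
    have hcast : ((m - k : ℕ) : ℤ) = (m : ℤ) - k := by
      exact_mod_cast Int.ofNat_sub hk'
    have hc : (-16 : ℤ) * (((m : ℤ) + k + 1) * ((m : ℤ) - k))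
        ≡ 4 * (2 * (k : ℤ) + 1) ^ 2 [ZMOD (p : ℤ) ^ 2] := by
      apply Int.ModEq.symm
      apply Int.modEq_iff_dvd.mpr
      refine ⟨-4, ?_⟩
      have hpz : (p : ℤ) = 2 * m + 1 := by exact_mod_cast congrArg (Nat.cast : ℕ → ℤ) hpm
      rw [hpz]; ring
    calc ((-16 : ℤ)) ^ (k + 1) * ((m + (k + 1)).descFactorial (2 * (k + 1)) : ℤ)
        = ((-16 : ℤ) * (((m : ℤ) + k + 1) * ((m : ℤ) - k)))
            * (((-16 : ℤ)) ^ k * ((m + k).descFactorial (2 * k) : ℤ)) := by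
          rw [hd]; push_cast [hcast]; ring
      _ ≡ (4 * (2 * (k : ℤ) + 1) ^ 2) * ((2 * k).factorial * (2 * k).choose k : ℤ)
            [ZMOD (p : ℤ) ^ 2] := Int.ModEq.mul hc ihk
      _ = ((2 * (k + 1)).factorial * (2 * (k + 1)).choose (k + 1) : ℤ) := (binom_step k).symm

theorem key_congruence (p : ℕ) (hp : p.Prime) (hodd : Odd p)
    (k : ℕ) (hk : k ≤ (p - 1) / 2) :
    ((-16 : ℤ)) ^ k * (Nat.choose ((p - 1) / 2 + k) (2 * k) : ℤ) ≡
      (Nat.choose (2 * k) k : ℤ) [ZMOD (p : ℤ) ^ 2] := by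
  obtain ⟨m, hm⟩ := hodd
  have hm' : (p - 1) / 2 = m := by omega
  rw [hm'] at hk ⊢
  have hpm : p = 2 * m + 1 := by omega
  have haux := aux_congr p m hpm k hk
  rw [Nat.descFactorial_eq_factorial_mul_choose] at haux
  have hmain : ((2 * k).factorial : ℤ) * (((-16 : ℤ)) ^ k * ((m + k).choose (2 * k) : ℤ))
      ≡ ((2 * k).factorial : ℤ) * ((2 * k).choose k : ℤ) [ZMOD (p : ℤ) ^ 2] := by
    calc ((2 * k).factorial : ℤ) * (((-16 : ℤ)) ^ k * ((m + k).choose (2 * k) : ℤ))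
        = ((-16 : ℤ)) ^ k * (((2 * k).factorial * (m + k).choose (2 * k) : ℕ) : ℤ) := by
          push_cast; ring
      _ ≡ ((2 * k).factorial * (2 * k).choose k : ℤ) [ZMOD (p : ℤ) ^ 2] := haux
      _ = ((2 * k).factorial : ℤ) * ((2 * k).choose k : ℤ) := by ring
  have hgcd : Int.gcd ((p : ℤ) ^ 2) ((2 * k).factorial : ℤ) = 1 := by
    have hnd : ¬ (p ∣ (2 * k).factorial) := by
      intro hdvd
      have := (Nat.Prime.dvd_factorial hp).mp hdvd
      omega
    have h1 : Nat.Coprime (p ^ 2) ((2 * k).factorial) :=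
      Nat.Coprime.pow_left 2 ((Nat.Prime.coprime_iff_not_dvd hp).mpr hnd)
    have : Int.gcd ((p ^ 2 : ℕ) : ℤ) (((2 * k).factorial : ℕ) : ℤ) = 1 := by
      rw [Int.gcd_natCast_natCast]; exact h1
    simpa using this
  have hppos := hp.pos
  have hpos : (0 : ℤ) < (p : ℤ) ^ 2 := by positivity
  have := Int.ModEq.cancel_left_div_gcd hpos hmain
  rw [hgcd] at this
  simpa using this
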